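/- Let d ≥ 1, r ≥ 1 and set p_r := 2r / log₂(2 + 2^r). Then for all functions f, g : ℤ^d → ℝ supported in {0,1}^d, one has (∑_{m ∈ ℤ^d} |(f*g)(m)|^r)^{1/r} ≤ (∑_{u ∈ ℤ^d} |f(u)|^{p_r})^{1/p_r} · (∑_{v ∈ ℤ^d} |g(v)|^{p_r})^{1/p_r}. -/

import Mathlib

open scoped BigOperators ENNReal

/-- Convolution of two functions on `ℤ^d`. -/
noncomputable def cconv {d : ℕ} (f g : (Fin d → ℤ) → ℝ) : (Fin d → ℤ) → ℝ :=
  fun m => ∑' u : Fin d → ℤ, f u * g (m - u)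

/-- A point of `ℤ^d` lies in the hypercube `{0,1}^d`. -/
def InCube {d : ℕ} (x : Fin d → ℤ) : Prop := ∀ i, x i = 0 ∨ x i = 1

/-- A function on `ℤ^d` is supported in `{0,1}^d`. -/
def SupportedInCube {d : ℕ} (f : (Fin d → ℤ) → ℝ) : Prop :=
  ∀ x : Fin d → ℤ, ¬ InCube x → f x = 0

/-- The `ℓ^s` norm of a function on `ℤ^d` (for `0 < s < ∞`). -/
noncomputable def lnorm {d : ℕ} (s : ℝ) (f : (Fin d → ℤ) → ℝ) : ℝ :=
  (∑' x : Fin d → ℤ, |f x| ^ s) ^ (1 / s)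

open Real Finset


lemma rpow_exp_convex {a : ℝ} (ha : 0 < a) {x y α β : ℝ} (hα : 0 ≤ α) (hβ : 0 ≤ β)
    (hαβ : α + β = 1) : a ^ (α * x + β * y) ≤ α * a ^ x + β * a ^ y := by
  rw [rpow_def_of_pos ha, rpow_def_of_pos ha, rpow_def_of_pos ha]
  have h := convexOn_exp.2 (Set.mem_univ (Real.log a * x)) (Set.mem_univ (Real.log a * y)) hα hβ hαβ
  simp only [smul_eq_mul] at h
  have e : Real.log a * (α * x + β * y) = α * (Real.log a * x) + β * (Real.log a * y) := by ring
  rw [e]; exact h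

lemma dagger_ge {z P : ℝ} (hz0 : 0 < z) (hz1 : z < 1) (hP : 2 ≤ P) :
    1 - z ^ P ≤ (1 - z) * (1 + z) ^ (P - 1) := by
  have h1z : (0:ℝ) < 1 + z := by linarith
  have hsplit : ∀ t : ℝ, (1 - z) * (1 + z) ^ (t - 1) = ((1 - z) / (1 + z)) * (1 + z) ^ t := by
    intro t
    rw [show t = 1 + (t - 1) by ring, Real.rpow_add h1z, Real.rpow_one]
    ring_nf
    rw [mul_comm]
    field_simp
    ring
  rcases eq_or_lt_of_le hP with rfl | hP2
  · rw [show (2:ℝ) - 1 = 1 by norm_num, Real.rpow_one, Real.rpow_two]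
    nlinarith
  · set c : ℝ := (1 - z) / (1 + z) with hc
    have hc0 : 0 ≤ c := div_nonneg (by linarith) h1z.le
    have hP1 : (0:ℝ) < P - 1 := by linarith
    have hne : P - 1 ≠ 0 := ne_of_gt hP1
    have hα : 0 ≤ (P - 2) / (P - 1) := div_nonneg (by linarith) hP1.le
    have hβ : 0 ≤ 1 / (P - 1) := by positivity
    have hαβ : (P - 2) / (P - 1) + 1 / (P - 1) = 1 := by field_simp; ring
    have h2 : ((P - 2) / (P - 1)) * 1 + (1 / (P - 1)) * P = 2 := by field_simp; ring
    have key1 : (1 + z) ^ (2:ℝ) ≤ ((P - 2) / (P - 1)) * (1 + z) ^ (1:ℝ) + (1 / (P - 1)) * (1 + z) ^ P := by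
      have h := rpow_exp_convex h1z hα hβ hαβ (x := 1) (y := P); rw [h2] at h; exact h
    have key2 : z ^ (2:ℝ) ≤ ((P - 2) / (P - 1)) * z ^ (1:ℝ) + (1 / (P - 1)) * z ^ P := by
      have h := rpow_exp_convex hz0 hα hβ hαβ (x := 1) (y := P); rw [h2] at h; exact h
    have phi1 : c * (1 + z) ^ (1:ℝ) + z ^ (1:ℝ) = 1 := by
      rw [Real.rpow_one, Real.rpow_one, hc]; field_simp; ring
    have phi2 : c * (1 + z) ^ (2:ℝ) + z ^ (2:ℝ) = 1 := by
      rw [Real.rpow_two, Real.rpow_two, hc]; field_simp; ring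
    have hphiP : 1 ≤ c * (1 + z) ^ P + z ^ P := by
      have := mul_le_mul_of_nonneg_left key1 hc0
      have hβ' : 0 < 1 / (P - 1) := by positivity
      nlinarith
    have := hsplit P
    nlinarith [this]

lemma dagger_le {z P : ℝ} (hz0 : 0 < z) (hz1 : z < 1) (hP1 : 1 ≤ P) (hP : P ≤ 2) :
    (1 - z) * (1 + z) ^ (P - 1) ≤ 1 - z ^ P := by
  have h1z : (0:ℝ) < 1 + z := by linarith
  have hsplit : (1 - z) * (1 + z) ^ (P - 1) = ((1 - z) / (1 + z)) * (1 + z) ^ P := by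
    rw [show P = 1 + (P - 1) by ring, Real.rpow_add h1z, Real.rpow_one]
    ring_nf
    rw [mul_comm]
    field_simp
    ring
  set c : ℝ := (1 - z) / (1 + z) with hc
  have hc0 : 0 ≤ c := div_nonneg (by linarith) h1z.le
  have hα : (0:ℝ) ≤ 2 - P := by linarith
  have hβ : (0:ℝ) ≤ P - 1 := by linarith
  have hαβ : (2 - P) + (P - 1) = 1 := by ring
  have h2 : (2 - P) * 1 + (P - 1) * 2 = P := by ring
  have key1 : (1 + z) ^ P ≤ (2 - P) * (1 + z) ^ (1:ℝ) + (P - 1) * (1 + z) ^ (2:ℝ) := by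
    have h := rpow_exp_convex h1z hα hβ hαβ (x := 1) (y := 2); rw [h2] at h; exact h
  have key2 : z ^ P ≤ (2 - P) * z ^ (1:ℝ) + (P - 1) * z ^ (2:ℝ) := by
    have h := rpow_exp_convex hz0 hα hβ hαβ (x := 1) (y := 2); rw [h2] at h; exact h
  have phi1 : c * (1 + z) ^ (1:ℝ) + z ^ (1:ℝ) = 1 := by
    rw [Real.rpow_one, Real.rpow_one, hc]; field_simp; ring
  have phi2 : c * (1 + z) ^ (2:ℝ) + z ^ (2:ℝ) = 1 := by
    rw [Real.rpow_two, Real.rpow_two, hc]; field_simp; ring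
  have := mul_le_mul_of_nonneg_left key1 hc0
  nlinarith [hsplit]

noncomputable def Nf (P : ℝ) : ℝ → ℝ :=
  fun s => (s+1)^P * s^(-(P/2)) - s^(P/2) - s^(-(P/2)) - ((2:ℝ)^P - 2)

lemma hasDerivAt_Nf (P : ℝ) {s : ℝ} (hs : 0 < s) :
    HasDerivAt (Nf P) ((P/2) * s^(-(P/2)-1) * ((s-1)*(s+1)^(P-1) + (1 - s^P))) s := by
  have hs1 : s + 1 ≠ 0 := by positivity
  have d1 : HasDerivAt (fun x : ℝ => (x+1)^P) (P * (s+1)^(P-1)) s := by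
    have h := Real.hasDerivAt_rpow_const (x := s+1) (p := P) (Or.inl hs1)
    have hid : HasDerivAt (fun x : ℝ => x + 1) 1 s := (hasDerivAt_id s).add_const 1
    have := h.comp s hid; rw [mul_one] at this; exact this
  have d2 : HasDerivAt (fun x : ℝ => x ^ (-(P/2))) ((-(P/2)) * s^(-(P/2)-1)) s :=
    Real.hasDerivAt_rpow_const (Or.inl hs.ne')
  have d3 : HasDerivAt (fun x : ℝ => x ^ (P/2)) ((P/2) * s^(P/2-1)) s :=
    Real.hasDerivAt_rpow_const (Or.inl hs.ne')
  have D := (((d1.mul d2).sub d3).sub d2).sub_const ((2:ℝ)^P - 2)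
  have e1 : s ^ (-(P/2)) = s ^ (-(P/2)-1) * s := by
    have h := Real.rpow_add_one hs.ne' (-(P/2)-1)
    rw [sub_add_cancel] at h
    exact h
  have e2 : (s+1)^P = (s+1)^(P-1) * (s+1) := by
    have h := Real.rpow_add_one hs1 (P-1)
    rw [sub_add_cancel] at h
    exact h
  have e3 : s ^ (P/2-1) = s^(-(P/2)-1) * s^P := by
    rw [← Real.rpow_add hs]; congr 1; ring
  refine D.congr_deriv ?_
  rw [e3, e2, e1]; ring

lemma Nf_one (P : ℝ) : Nf P 1 = 0 := by
  simp [Nf, Real.one_rpow]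
  ring

lemma Nf_nonneg_of_le_one {P : ℝ} (hP : 2 ≤ P) {s : ℝ} (hs : 0 < s) (hs1 : s ≤ 1) :
    0 ≤ Nf P s := by
  have anti : AntitoneOn (Nf P) (Set.Ioc 0 1) := by
    apply antitoneOn_of_deriv_nonpos (convex_Ioc 0 1)
    · intro x hx
      exact (hasDerivAt_Nf P hx.1).continuousAt.continuousWithinAt
    · intro x hx
      rw [interior_Ioc] at hx
      exact (hasDerivAt_Nf P hx.1).differentiableAt.differentiableWithinAt
    · intro x hx
      rw [interior_Ioc] at hx
      rw [(hasDerivAt_Nf P hx.1).deriv]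
      have hb : (x-1)*(x+1)^(P-1) + (1 - x^P) ≤ 0 := by
        have hd := dagger_ge hx.1 hx.2 hP
        rw [add_comm x 1]
        nlinarith [hd]
      have hpos : (0:ℝ) < x ^ (-(P/2)-1) := rpow_pos_of_pos hx.1 _
      have hP2 : (0:ℝ) ≤ P/2 := by linarith
      exact mul_nonpos_of_nonneg_of_nonpos (by positivity) hb
  have h := anti (Set.mem_Ioc.mpr ⟨hs, hs1⟩) (Set.mem_Ioc.mpr ⟨one_pos, le_refl 1⟩) hs1
  rw [Nf_one] at h
  exact h

lemma Nf_nonpos_of_le_one {P : ℝ} (hP1 : 1 ≤ P) (hP2 : P ≤ 2) {s : ℝ} (hs : 0 < s) (hs1 : s ≤ 1) :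
    Nf P s ≤ 0 := by
  have mono : MonotoneOn (Nf P) (Set.Ioc 0 1) := by
    apply monotoneOn_of_deriv_nonneg (convex_Ioc 0 1)
    · intro x hx
      exact (hasDerivAt_Nf P hx.1).continuousAt.continuousWithinAt
    · intro x hx
      rw [interior_Ioc] at hx
      exact (hasDerivAt_Nf P hx.1).differentiableAt.differentiableWithinAt
    · intro x hx
      rw [interior_Ioc] at hx
      rw [(hasDerivAt_Nf P hx.1).deriv]
      have hb : 0 ≤ (x-1)*(x+1)^(P-1) + (1 - x^P) := by
        have hd := dagger_le hx.1 hx.2 hP1 hP2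
        rw [add_comm x 1]
        nlinarith [hd]
      exact mul_nonneg (mul_nonneg (by linarith) (rpow_pos_of_pos hx.1 _).le) hb
  have h := mono (Set.mem_Ioc.mpr ⟨hs, hs1⟩) (Set.mem_Ioc.mpr ⟨one_pos, le_refl 1⟩) hs1
  rw [Nf_one] at h
  exact h

lemma Nf_inv {P s : ℝ} (hs : 0 < s) : Nf P s⁻¹ = Nf P s := by
  have hs1 : (0:ℝ) < s + 1 := by positivity
  have h1 : s⁻¹ + 1 = (s+1)/s := by field_simp; ring
  have h2 : (s⁻¹ : ℝ) ^ (-(P/2)) = s ^ (P/2) := by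
    rw [Real.inv_rpow hs.le, ← Real.rpow_neg hs.le, neg_neg]
  have h3 : (s⁻¹ : ℝ) ^ (P/2) = s ^ (-(P/2)) := by
    rw [Real.inv_rpow hs.le, ← Real.rpow_neg hs.le]
  have h4 : (s⁻¹ + 1) ^ P = (s+1)^P / s^P := by
    rw [h1, Real.div_rpow hs1.le hs.le]
  unfold Nf
  rw [h4, h2, h3, div_mul_eq_mul_div, mul_div_assoc, ← Real.rpow_sub hs,
    show P/2 - P = -(P/2) by ring]
  ring

lemma Nf_nonneg {P : ℝ} (hP : 2 ≤ P) {s : ℝ} (hs : 0 < s) : 0 ≤ Nf P s := by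
  rcases le_or_gt s 1 with h | h
  · exact Nf_nonneg_of_le_one hP hs h
  · rw [← Nf_inv hs]
    exact Nf_nonneg_of_le_one hP (inv_pos.mpr hs) (inv_le_one_of_one_le₀ h.le)

lemma Nf_nonpos {P : ℝ} (hP1 : 1 ≤ P) (hP2 : P ≤ 2) {s : ℝ} (hs : 0 < s) : Nf P s ≤ 0 := by
  rcases le_or_gt s 1 with h | h
  · exact Nf_nonpos_of_le_one hP1 hP2 hs h
  · rw [← Nf_inv hs]
    exact Nf_nonpos_of_le_one hP1 hP2 (inv_pos.mpr hs) (inv_le_one_of_one_le₀ h.le)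

lemma L_ge_norm {P : ℝ} (hP : 2 ≤ P) {σ : ℝ} (hσ : 0 < σ) :
    σ^P + 1 + ((2:ℝ)^P - 2)*σ^(P/2) ≤ (σ+1)^P := by
  have hN := Nf_nonneg hP hσ
  unfold Nf at hN
  have m1 : σ^(-(P/2)) * σ^(P/2) = 1 := by
    rw [← Real.rpow_add hσ]; norm_num
  have m2 : σ^(P/2) * σ^(P/2) = σ^P := by
    rw [← Real.rpow_add hσ]; congr 1; ring
  have hN' : σ^(P/2) + σ^(-(P/2)) + ((2:ℝ)^P - 2) ≤ (σ+1)^P * σ^(-(P/2)) := by linarith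
  have hmul := mul_le_mul_of_nonneg_right hN' (le_of_lt (rpow_pos_of_pos hσ (P/2)))
  have h5 : (σ+1)^P * σ^(-(P/2)) * σ^(P/2) = (σ+1)^P := by rw [mul_assoc, m1, mul_one]
  have h6 : (σ^(P/2) + σ^(-(P/2)) + ((2:ℝ)^P - 2)) * σ^(P/2) = σ^P + 1 + ((2:ℝ)^P - 2)*σ^(P/2) := by
    rw [add_mul, add_mul, m2, m1]
  rw [h6, h5] at hmul
  exact hmul

lemma L_le_norm {P : ℝ} (hP1 : 1 ≤ P) (hP2 : P ≤ 2) {σ : ℝ} (hσ : 0 < σ) :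
    (σ+1)^P ≤ σ^P + 1 + ((2:ℝ)^P - 2)*σ^(P/2) := by
  have hN := Nf_nonpos hP1 hP2 hσ
  unfold Nf at hN
  have m1 : σ^(-(P/2)) * σ^(P/2) = 1 := by
    rw [← Real.rpow_add hσ]; norm_num
  have m2 : σ^(P/2) * σ^(P/2) = σ^P := by
    rw [← Real.rpow_add hσ]; congr 1; ring
  have hN' : (σ+1)^P * σ^(-(P/2)) ≤ σ^(P/2) + σ^(-(P/2)) + ((2:ℝ)^P - 2) := by linarith
  have hmul := mul_le_mul_of_nonneg_right hN' (le_of_lt (rpow_pos_of_pos hσ (P/2)))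
  have h5 : (σ+1)^P * σ^(-(P/2)) * σ^(P/2) = (σ+1)^P := by rw [mul_assoc, m1, mul_one]
  have h6 : (σ^(P/2) + σ^(-(P/2)) + ((2:ℝ)^P - 2)) * σ^(P/2) = σ^P + 1 + ((2:ℝ)^P - 2)*σ^(P/2) := by
    rw [add_mul, add_mul, m2, m1]
  rw [h6, h5] at hmul
  exact hmul

lemma L_scale {P s t : ℝ} (hs : 0 < s) (ht : 0 < t) :
    t^P * ((s/t)^P + 1 + ((2:ℝ)^P - 2)*(s/t)^(P/2)) =
      s^P + t^P + ((2:ℝ)^P - 2)*(s*t)^(P/2) ∧ t^P * ((s/t)+1)^P = (s+t)^P := by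
  have e1 : t^P * (s/t)^P = s^P := by
    rw [← Real.mul_rpow ht.le (by positivity)]
    congr 1; field_simp
  have e2 : t^P * (s/t)^(P/2) = (s*t)^(P/2) := by
    have ht2 : t^P = (t^(2:ℝ))^(P/2) := by
      rw [← Real.rpow_mul ht.le]; congr 1; ring
    rw [ht2, ← Real.mul_rpow (by positivity) (by positivity)]
    congr 1
    rw [Real.rpow_two]; field_simp
  have e3 : t^P * ((s/t)+1)^P = (s+t)^P := by
    rw [← Real.mul_rpow ht.le (by positivity)]
    congr 1; field_simp
  constructor
  · rw [mul_add, mul_add, e1, mul_one, ← mul_assoc, mul_comm (t^P) ((2:ℝ)^P - 2), mul_assoc, e2]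
  · exact e3

lemma L_ge {P : ℝ} (hP : 2 ≤ P) {s t : ℝ} (hs : 0 ≤ s) (ht : 0 ≤ t) :
    s^P + t^P + ((2:ℝ)^P - 2)*(s*t)^(P/2) ≤ (s+t)^P := by
  have hP0 : P ≠ 0 := by linarith
  have hP20 : P/2 ≠ 0 := by simp; intro h; linarith
  rcases eq_or_lt_of_le ht with rfl | ht'
  · simp [Real.zero_rpow hP0, Real.zero_rpow hP20]
  rcases eq_or_lt_of_le hs with rfl | hs'
  · simp [Real.zero_rpow hP0, Real.zero_rpow hP20]
  have key := L_ge_norm hP (div_pos hs' ht')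
  have hsc := L_scale (P := P) hs' ht'
  have := mul_le_mul_of_nonneg_left key (le_of_lt (rpow_pos_of_pos ht' P))
  rw [hsc.1, hsc.2] at this
  exact this

lemma L_le {P : ℝ} (hP1 : 1 ≤ P) (hP2 : P ≤ 2) {s t : ℝ} (hs : 0 ≤ s) (ht : 0 ≤ t) :
    (s+t)^P ≤ s^P + t^P + ((2:ℝ)^P - 2)*(s*t)^(P/2) := by
  have hP0 : P ≠ 0 := by linarith
  have hP20 : P/2 ≠ 0 := by simp; intro h; linarith
  rcases eq_or_lt_of_le ht with rfl | ht'
  · simp [Real.zero_rpow hP0, Real.zero_rpow hP20]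
  rcases eq_or_lt_of_le hs with rfl | hs'
  · simp [Real.zero_rpow hP0, Real.zero_rpow hP20]
  have key := L_le_norm hP1 hP2 (div_pos hs' ht')
  have hsc := L_scale (P := P) hs' ht'
  have := mul_le_mul_of_nonneg_left key (le_of_lt (rpow_pos_of_pos ht' P))
  rw [hsc.1, hsc.2] at this
  exact this

lemma shift_rpow {q x1 x2 δ : ℝ} (hq : 1 ≤ q) (h0 : 0 ≤ x1) (h12 : x1 ≤ x2) (hδ : 0 ≤ δ) :
    (x1 + δ)^q - x1^q ≤ (x2 + δ)^q - x2^q := by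
  rcases eq_or_lt_of_le (by linarith : (0:ℝ) ≤ (x2 - x1) + δ) with hS | hS
  · have h1 : x2 = x1 := by linarith
    have h2 : δ = 0 := by linarith
    simp [h1, h2]
  set S : ℝ := (x2 - x1) + δ with hSdef
  set l : ℝ := (x2 - x1) / S with hl
  have hl0 : 0 ≤ l := div_nonneg (by linarith) hS.le
  have hl1 : l ≤ 1 := by
    rw [hl, div_le_one hS]; linarith
  have hc := convexOn_rpow hq
  have m1 : x1 + δ = l * x1 + (1 - l) * (x2 + δ) := by
    rw [hl]; field_simp [hS.ne']; rw [hSdef]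
    ring
  have m2 : x2 = (1 - l) * x1 + l * (x2 + δ) := by
    rw [hl]; field_simp [hS.ne']; rw [hSdef]
    ring
  have c1 := hc.2 (Set.mem_Ici.mpr h0) (Set.mem_Ici.mpr (by linarith : (0:ℝ) ≤ x2 + δ))
      hl0 (by linarith : (0:ℝ) ≤ 1 - l) (by ring)
  have c2 := hc.2 (Set.mem_Ici.mpr h0) (Set.mem_Ici.mpr (by linarith : (0:ℝ) ≤ x2 + δ))
      (by linarith : (0:ℝ) ≤ 1 - l) hl0 (by ring)
  simp only [smul_eq_mul] at c1 c2
  rw [← m1] at c1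
  rw [← m2] at c2
  linarith


set_option maxHeartbeats 1000000 in
lemma two_point {r p q : ℝ} (hp1 : 1 ≤ p) (hp2 : p ≤ 2) (hq1 : 1 ≤ q) (hpq : p * q = r)
    (hkey : (2:ℝ)^(2*q) = 2 + 2^r) {a b c e : ℝ}
    (ha : 0 ≤ a) (hb : 0 ≤ b) (hc : 0 ≤ c) (he : 0 ≤ e) :
    (a*c)^r + (a*e + b*c)^r + (b*e)^r ≤ ((a^p + b^p) * (c^p + e^p))^q := by
  have hp0 : 0 < p := by linarith
  have hq0 : 0 < q := by linarith
  set x1 : ℝ := (a*c)^p with hx1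
  set x2 : ℝ := (a*e)^p with hx2
  set x3 : ℝ := (b*c)^p with hx3
  set x4 : ℝ := (b*e)^p with hx4
  have hx1n : 0 ≤ x1 := rpow_nonneg (by positivity) p
  have hx2n : 0 ≤ x2 := rpow_nonneg (by positivity) p
  have hx3n : 0 ≤ x3 := rpow_nonneg (by positivity) p
  have hx4n : 0 ≤ x4 := rpow_nonneg (by positivity) p
  set μ : ℝ := (a*e*(b*c))^(p/2) with hμ
  have hμn : 0 ≤ μ := rpow_nonneg (by positivity) _
  have hzz : μ * μ = (a*e*(b*c))^p := by
    rw [hμ, ← Real.rpow_add' (by positivity) (by simp; intro h; linarith)]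
    congr 1; ring
  have hμ23 : μ * μ = x2 * x3 := by
    rw [hzz, hx2, hx3, ← Real.mul_rpow (by positivity) (by positivity)]
  have hμ14 : μ * μ = x1 * x4 := by
    rw [hzz, hx1, hx4, ← Real.mul_rpow (by positivity) (by positivity)]
    congr 1; ring
  have h23 : 2*μ ≤ x2 + x3 := by nlinarith [sq_nonneg (x2 - x3), sq_nonneg (x2 + x3)]
  have h14 : 2*μ ≤ x1 + x4 := by nlinarith [sq_nonneg (x1 - x4), sq_nonneg (x1 + x4)]
  have h2p2 : (2:ℝ) ≤ 2^p := by
    have := (Real.rpow_le_rpow_left_iff (y := 1) (z := p) one_lt_two).mpr hp1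
    rwa [Real.rpow_one] at this
  have h2p4 : (2:ℝ)^p ≤ 4 := by
    have := (Real.rpow_le_rpow_left_iff (y := p) (z := 2) one_lt_two).mpr hp2
    rwa [show (2:ℝ)^(2:ℝ) = 4 by rw [show (2:ℝ) = ((2:ℕ):ℝ) by norm_num, Real.rpow_natCast]; norm_num] at this
  -- step 1
  have s1 : (a*e + b*c)^p ≤ x2 + x3 + ((2:ℝ)^p - 2)*μ :=
    L_le hp1 hp2 (by positivity) (by positivity)
  have s1' : (a*e + b*c)^r ≤ (x2 + x3 + ((2:ℝ)^p - 2)*μ)^q := by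
    rw [← hpq, Real.rpow_mul (by positivity)]
    exact Real.rpow_le_rpow (rpow_nonneg (by positivity) p) s1 hq0.le
  -- step 2a (shift)
  have hμ2p : ((2:ℝ)^p - 2)*μ ≤ 2*μ := mul_le_mul_of_nonneg_right (by linarith) hμn
  have S : (x1 + x4 + 2*μ)^q - ((2:ℝ)^p*μ)^q
      ≤ (x1 + x2 + x3 + x4)^q - (x2 + x3 + ((2:ℝ)^p - 2)*μ)^q := by
    have h := shift_rpow (q := q) (x1 := 2*μ + ((2:ℝ)^p - 2)*μ)
      (x2 := x2 + x3 + ((2:ℝ)^p - 2)*μ) (δ := x1 + x4 - ((2:ℝ)^p - 2)*μ)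
      hq1 (by nlinarith) (by linarith) (by linarith)
    rw [show 2*μ + ((2:ℝ)^p - 2)*μ + (x1 + x4 - ((2:ℝ)^p - 2)*μ) = x1 + x4 + 2*μ by ring,
      show x2 + x3 + ((2:ℝ)^p - 2)*μ + (x1 + x4 - ((2:ℝ)^p - 2)*μ) = x1 + x2 + x3 + x4 by ring,
      show 2*μ + ((2:ℝ)^p - 2)*μ = (2:ℝ)^p*μ by ring] at h
    exact h
  -- step 2b
  have hsq : Real.sqrt (x1*x4) = μ := by rw [← hμ14]; exact Real.sqrt_mul_self hμn
  have sb : x1^q + x4^q + ((2:ℝ)^(2*q) - 2)*μ^q ≤ (x1 + x4 + 2*μ)^q := by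
    have h := L_ge (P := 2*q) (by linarith) (Real.sqrt_nonneg x1) (Real.sqrt_nonneg x4)
    have e1 : (Real.sqrt x1)^(2*q) = x1^q := by
      rw [Real.rpow_mul (Real.sqrt_nonneg x1), Real.rpow_two, Real.sq_sqrt hx1n]
    have e2 : (Real.sqrt x4)^(2*q) = x4^q := by
      rw [Real.rpow_mul (Real.sqrt_nonneg x4), Real.rpow_two, Real.sq_sqrt hx4n]
    have e3 : (Real.sqrt x1 * Real.sqrt x4)^(2*q/2) = μ^q := by
      rw [show 2*q/2 = q by ring, ← Real.sqrt_mul hx1n, hsq]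
    have e4 : (Real.sqrt x1 + Real.sqrt x4)^(2*q) = (x1 + x4 + 2*μ)^q := by
      rw [Real.rpow_mul (by positivity), Real.rpow_two]
      congr 1
      have : Real.sqrt x1 * Real.sqrt x4 = μ := by rw [← Real.sqrt_mul hx1n, hsq]
      nlinarith [Real.sq_sqrt hx1n, Real.sq_sqrt hx4n]
    rw [e1, e2, e3, e4] at h
    exact h
  -- assemble
  have f1 : (a*c)^r = x1^q := by
    rw [← hpq, Real.rpow_mul (by positivity), hx1]
  have f4 : (b*e)^r = x4^q := by
    rw [← hpq, Real.rpow_mul (by positivity), hx4]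
  have fμ : ((2:ℝ)^p*μ)^q = 2^r*μ^q := by
    rw [Real.mul_rpow (by positivity) hμn, ← Real.rpow_mul (by norm_num : (0:ℝ) ≤ 2), hpq]
  have fSum : ((a^p + b^p) * (c^p + e^p))^q = (x1 + x2 + x3 + x4)^q := by
    congr 1
    rw [hx1, hx2, hx3, hx4, Real.mul_rpow ha hc, Real.mul_rpow ha he,
      Real.mul_rpow hb hc, Real.mul_rpow hb he]
    ring
  have hkey' : (2:ℝ)^(2*q) - 2 = 2^r := by rw [hkey]; ring
  rw [f1, f4, fSum]
  rw [fμ] at S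
  rw [hkey'] at sb
  linarith [sb, s1', S]
  

abbrev box (d : ℕ) (S : Finset ℤ) : Finset (Fin d → ℤ) := Fintype.piFinset fun _ => S

lemma mem_box {d : ℕ} {S : Finset ℤ} {x : Fin d → ℤ} : x ∈ box d S ↔ ∀ i, x i ∈ S :=
  Fintype.mem_piFinset

lemma sum_box_succ {d : ℕ} (S : Finset ℤ) (φ : (Fin (d+1) → ℤ) → ℝ) :
    ∑ x ∈ box (d+1) S, φ x = ∑ j ∈ S, ∑ y ∈ box d S, φ (Fin.cons j y) := by
  rw [← Finset.sum_product']
  refine Finset.sum_nbij' (fun x => (x 0, Fin.tail x)) (fun pr => Fin.cons pr.1 pr.2)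
    ?_ ?_ ?_ ?_ ?_
  · intro x hx
    rw [mem_box] at hx
    rw [Finset.mem_product]
    exact ⟨hx 0, by rw [mem_box]; intro i; exact hx i.succ⟩
  · intro pr hpr
    rw [Finset.mem_product] at hpr
    rw [mem_box]
    intro i
    refine Fin.cases ?_ ?_ i
    · simpa using hpr.1
    · intro j; simpa using (mem_box.mp hpr.2) j
  · intro x _; exact Fin.cons_self_tail x
  · intro pr _; simp
  · intro x _; rw [Fin.cons_self_tail]

lemma cons_sub {d : ℕ} (k j : ℤ) (m u : Fin d → ℤ) :
    (Fin.cons k m : Fin (d+1) → ℤ) - Fin.cons j u = Fin.cons (k - j) (m - u) := by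
  funext i
  refine Fin.cases ?_ ?_ i <;> simp

noncomputable def convF (d : ℕ) (f g : (Fin d → ℤ) → ℝ) (m : Fin d → ℤ) : ℝ :=
  ∑ u ∈ box d ({0,1} : Finset ℤ), f u * g (m - u)

lemma convF_nonneg {d : ℕ} {f g : (Fin d → ℤ) → ℝ} (hf : ∀ x, 0 ≤ f x) (hg : ∀ x, 0 ≤ g x)
    (m : Fin d → ℤ) : 0 ≤ convF d f g m :=
  Finset.sum_nonneg fun u _ => mul_nonneg (hf u) (hg _)

lemma convF_succ {d : ℕ} (f g : (Fin (d+1) → ℤ) → ℝ) (k : ℤ) (m : Fin d → ℤ) :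
    convF (d+1) f g (Fin.cons k m) =
      ∑ j ∈ ({0,1} : Finset ℤ),
        convF d (fun y => f (Fin.cons j y)) (fun y => g (Fin.cons (k - j) y)) m := by
  unfold convF
  rw [sum_box_succ]
  refine Finset.sum_congr rfl fun j _ => Finset.sum_congr rfl fun u _ => ?_
  rw [cons_sub]

lemma sum_S2 (ψ : ℤ → ℝ) : ∑ j ∈ ({0,1} : Finset ℤ), ψ j = ψ 0 + ψ 1 := by
  norm_num

lemma sum_S3 (ψ : ℤ → ℝ) : ∑ j ∈ ({0,1,2} : Finset ℤ), ψ j = ψ 0 + ψ 1 + ψ 2 := by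
  norm_num [add_assoc]

lemma cons_notin_box {d : ℕ} {S : Finset ℤ} {j : ℤ} (hj : j ∉ S) (y : Fin d → ℤ) :
    (Fin.cons j y : Fin (d+1) → ℤ) ∉ box (d+1) S := by
  rw [mem_box]
  push_neg
  exact ⟨0, by simpa using hj⟩

lemma convF_right_zero {d : ℕ} (f g : (Fin d → ℤ) → ℝ) (hg : ∀ y, g y = 0) (m : Fin d → ℤ) :
    convF d f g m = 0 :=
  Finset.sum_eq_zero fun u _ => by rw [hg, mul_zero]

lemma slice_supp {d : ℕ} {f : (Fin (d+1) → ℤ) → ℝ}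
    (hfs : ∀ x, x ∉ box (d+1) ({0,1} : Finset ℤ) → f x = 0) (j : ℤ) :
    ∀ y, y ∉ box d ({0,1} : Finset ℤ) → f (Fin.cons j y) = 0 := by
  intro y hy
  apply hfs
  rw [mem_box] at hy ⊢
  push_neg at hy ⊢
  obtain ⟨i, hi⟩ := hy
  exact ⟨i.succ, by simpa using hi⟩

set_option maxHeartbeats 1000000 in
theorem MF {p q r : ℝ} (hp1 : 1 ≤ p) (hp2 : p ≤ 2) (hq1 : 1 ≤ q) (hpq : p * q = r)
    (hkey : (2:ℝ)^(2*q) = 2 + 2^r) :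
    ∀ (d : ℕ) (f g : (Fin d → ℤ) → ℝ), (∀ x, 0 ≤ f x) → (∀ x, 0 ≤ g x) →
      (∀ x, x ∉ box d ({0,1}:Finset ℤ) → f x = 0) →
      (∀ x, x ∉ box d ({0,1}:Finset ℤ) → g x = 0) →
      ∑ m ∈ box d ({0,1,2}:Finset ℤ), (convF d f g m)^r
        ≤ ((∑ x ∈ box d ({0,1}:Finset ℤ), f x ^ p) *
            (∑ x ∈ box d ({0,1}:Finset ℤ), g x ^ p))^q := by
  have hp0 : 0 < p := by linarith
  have hq0 : 0 < q := by linarith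
  have hr1 : 1 ≤ r := by nlinarith
  have hr0 : 0 < r := by linarith
  intro d
  induction d with
  | zero =>
    intro f g hf hg _ _
    have huniq : ∀ (S : Finset ℤ) (φ : (Fin 0 → ℤ) → ℝ),
        ∑ x ∈ box 0 S, φ x = φ default := by
      intro S φ
      have : box 0 S = (Finset.univ : Finset (Fin 0 → ℤ)) :=
        Finset.eq_univ_iff_forall.mpr (fun x => mem_box.mpr (fun i => i.elim0))
      rw [this, Finset.univ_unique, Finset.sum_singleton]
      exact congrArg φ (Subsingleton.elim _ _)
    rw [huniq, huniq, huniq]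
    have hdd : (default : Fin 0 → ℤ) - default = default := Subsingleton.elim _ _
    have hc : convF 0 f g default = f default * g default := by
      unfold convF
      rw [huniq, hdd]
    rw [hc]
    apply le_of_eq
    rw [← Real.mul_rpow (hf _) (hg _), ← Real.rpow_mul (mul_nonneg (hf _) (hg _)), hpq]
  | succ d ih =>
    intro f g hf hg hfs hgs
    -- zero slices
    have hzg1 : ∀ y : Fin d → ℤ, g (Fin.cons ((0:ℤ) - 1) y) = 0 :=
      fun y => hgs _ (cons_notin_box (by norm_num) y)
    have hzg2 : ∀ y : Fin d → ℤ, g (Fin.cons ((2:ℤ) - 0) y) = 0 :=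
      fun y => hgs _ (cons_notin_box (by norm_num) y)
    -- abbreviations
    set A0 : ℝ := ∑ x ∈ box d ({0,1}:Finset ℤ), f (Fin.cons 0 x) ^ p with hA0def
    set A1 : ℝ := ∑ x ∈ box d ({0,1}:Finset ℤ), f (Fin.cons 1 x) ^ p with hA1def
    set B0 : ℝ := ∑ x ∈ box d ({0,1}:Finset ℤ), g (Fin.cons 0 x) ^ p with hB0def
    set B1 : ℝ := ∑ x ∈ box d ({0,1}:Finset ℤ), g (Fin.cons 1 x) ^ p with hB1def
    have hA0 : 0 ≤ A0 := Finset.sum_nonneg fun x _ => Real.rpow_nonneg (hf _) p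
    have hA1 : 0 ≤ A1 := Finset.sum_nonneg fun x _ => Real.rpow_nonneg (hf _) p
    have hB0 : 0 ≤ B0 := Finset.sum_nonneg fun x _ => Real.rpow_nonneg (hg _) p
    have hB1 : 0 ≤ B1 := Finset.sum_nonneg fun x _ => Real.rpow_nonneg (hg _) p
    -- IH applications
    have ih00 := ih (fun y => f (Fin.cons 0 y)) (fun y => g (Fin.cons 0 y))
      (fun y => hf _) (fun y => hg _) (slice_supp hfs 0) (slice_supp hgs 0)
    have ih01 := ih (fun y => f (Fin.cons 0 y)) (fun y => g (Fin.cons 1 y))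
      (fun y => hf _) (fun y => hg _) (slice_supp hfs 0) (slice_supp hgs 1)
    have ih10 := ih (fun y => f (Fin.cons 1 y)) (fun y => g (Fin.cons 0 y))
      (fun y => hf _) (fun y => hg _) (slice_supp hfs 1) (slice_supp hgs 0)
    have ih11 := ih (fun y => f (Fin.cons 1 y)) (fun y => g (Fin.cons 1 y))
      (fun y => hf _) (fun y => hg _) (slice_supp hfs 1) (slice_supp hgs 1)
    -- decompose LHS
    rw [sum_box_succ ({0,1,2}:Finset ℤ) (fun m => (convF (d+1) f g m)^r), sum_S3]
    have e0 : ∑ m ∈ box d ({0,1,2}:Finset ℤ), (convF (d+1) f g (Fin.cons 0 m))^r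
        = ∑ m ∈ box d ({0,1,2}:Finset ℤ),
            (convF d (fun y => f (Fin.cons 0 y)) (fun y => g (Fin.cons ((0:ℤ)-0) y)) m)^r := by
      refine Finset.sum_congr rfl fun m _ => ?_
      rw [convF_succ, sum_S2]
      rw [convF_right_zero _ _ hzg1 m, add_zero]
    have e1 : ∑ m ∈ box d ({0,1,2}:Finset ℤ), (convF (d+1) f g (Fin.cons 1 m))^r
        = ∑ m ∈ box d ({0,1,2}:Finset ℤ),
            (convF d (fun y => f (Fin.cons 0 y)) (fun y => g (Fin.cons ((1:ℤ)-0) y)) m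
             + convF d (fun y => f (Fin.cons 1 y)) (fun y => g (Fin.cons ((1:ℤ)-1) y)) m)^r := by
      refine Finset.sum_congr rfl fun m _ => ?_
      rw [convF_succ, sum_S2]
    have e2 : ∑ m ∈ box d ({0,1,2}:Finset ℤ), (convF (d+1) f g (Fin.cons 2 m))^r
        = ∑ m ∈ box d ({0,1,2}:Finset ℤ),
            (convF d (fun y => f (Fin.cons 1 y)) (fun y => g (Fin.cons ((2:ℤ)-1) y)) m)^r := by
      refine Finset.sum_congr rfl fun m _ => ?_
      rw [convF_succ, sum_S2]
      rw [convF_right_zero _ _ hzg2 m, zero_add]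
    rw [e0, e1, e2]
    norm_num
    -- RHS decomposition
    rw [sum_box_succ ({0,1}:Finset ℤ) (fun x => f x ^ p),
        sum_box_succ ({0,1}:Finset ℤ) (fun x => g x ^ p), sum_S2, sum_S2]
    have pa : ∀ {X : ℝ}, 0 ≤ X → (X^(1/p))^p = X := by
      intro X hX
      rw [← Real.rpow_mul hX, one_div, inv_mul_cancel₀ hp0.ne', Real.rpow_one]
    have em : ∀ {X Y : ℝ}, 0 ≤ X → 0 ≤ Y → (X^(1/p) * Y^(1/p))^r = (X*Y)^q := by
      intro X Y hX hY
      rw [← Real.mul_rpow hX hY, ← Real.rpow_mul (mul_nonneg hX hY),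
        show 1/p*r = q by rw [← hpq]; field_simp]
    have em2 : ∀ {X Y : ℝ}, 0 ≤ X → 0 ≤ Y → ((X*Y)^q)^(1/r) = X^(1/p) * Y^(1/p) := by
      intro X Y hX hY
      rw [← em hX hY, ← Real.rpow_mul (mul_nonneg (Real.rpow_nonneg hX _) (Real.rpow_nonneg hY _)),
        mul_one_div_cancel hr0.ne', Real.rpow_one]
    have key := two_point hp1 hp2 hq1 hpq hkey
      (Real.rpow_nonneg hA0 (1/p)) (Real.rpow_nonneg hA1 (1/p))
      (Real.rpow_nonneg hB0 (1/p)) (Real.rpow_nonneg hB1 (1/p))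
    rw [pa hA0, pa hA1, pa hB0, pa hB1] at key
    have b00 : ∑ m ∈ box d ({0,1,2}:Finset ℤ),
        convF d (fun y => f (Fin.cons 0 y)) (fun y => g (Fin.cons 0 y)) m ^ r
        ≤ (A0^(1/p) * B0^(1/p))^r := by rw [em hA0 hB0]; exact ih00
    have b11 : ∑ m ∈ box d ({0,1,2}:Finset ℤ),
        convF d (fun y => f (Fin.cons 1 y)) (fun y => g (Fin.cons 1 y)) m ^ r
        ≤ (A1^(1/p) * B1^(1/p))^r := by rw [em hA1 hB1]; exact ih11
    have b01 : ∑ m ∈ box d ({0,1,2}:Finset ℤ),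
        (convF d (fun y => f (Fin.cons 0 y)) (fun y => g (Fin.cons 1 y)) m
         + convF d (fun y => f (Fin.cons 1 y)) (fun y => g (Fin.cons 0 y)) m) ^ r
        ≤ (A0^(1/p) * B1^(1/p) + A1^(1/p) * B0^(1/p))^r := by
      have hφ : ∀ m ∈ box d ({0,1,2}:Finset ℤ),
          0 ≤ convF d (fun y => f (Fin.cons 0 y)) (fun y => g (Fin.cons 1 y)) m :=
        fun m _ => convF_nonneg (fun y => hf _) (fun y => hg _) m
      have hψ : ∀ m ∈ box d ({0,1,2}:Finset ℤ),
          0 ≤ convF d (fun y => f (Fin.cons 1 y)) (fun y => g (Fin.cons 0 y)) m :=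
        fun m _ => convF_nonneg (fun y => hf _) (fun y => hg _) m
      have mink := Real.Lp_add_le_of_nonneg (s := box d ({0,1,2}:Finset ℤ))
        (f := fun m => convF d (fun y => f (Fin.cons 0 y)) (fun y => g (Fin.cons 1 y)) m)
        (g := fun m => convF d (fun y => f (Fin.cons 1 y)) (fun y => g (Fin.cons 0 y)) m)
        hr1 hφ hψ
      have hs01 : (0:ℝ) ≤ ∑ m ∈ box d ({0,1,2}:Finset ℤ),
          convF d (fun y => f (Fin.cons 0 y)) (fun y => g (Fin.cons 1 y)) m ^ r :=
        Finset.sum_nonneg fun m hm => Real.rpow_nonneg (hφ m hm) r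
      have hs10 : (0:ℝ) ≤ ∑ m ∈ box d ({0,1,2}:Finset ℤ),
          convF d (fun y => f (Fin.cons 1 y)) (fun y => g (Fin.cons 0 y)) m ^ r :=
        Finset.sum_nonneg fun m hm => Real.rpow_nonneg (hψ m hm) r
      have c01 := Real.rpow_le_rpow hs01 ih01 (by positivity : (0:ℝ) ≤ 1/r)
      have c10 := Real.rpow_le_rpow hs10 ih10 (by positivity : (0:ℝ) ≤ 1/r)
      rw [em2 hA0 hB1] at c01
      rw [em2 hA1 hB0] at c10
      have hT : (0:ℝ) ≤ ∑ m ∈ box d ({0,1,2}:Finset ℤ),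
          (convF d (fun y => f (Fin.cons 0 y)) (fun y => g (Fin.cons 1 y)) m
           + convF d (fun y => f (Fin.cons 1 y)) (fun y => g (Fin.cons 0 y)) m) ^ r :=
        Finset.sum_nonneg fun m hm => Real.rpow_nonneg (add_nonneg (hφ m hm) (hψ m hm)) r
      have back : ((∑ m ∈ box d ({0,1,2}:Finset ℤ),
          (convF d (fun y => f (Fin.cons 0 y)) (fun y => g (Fin.cons 1 y)) m
           + convF d (fun y => f (Fin.cons 1 y)) (fun y => g (Fin.cons 0 y)) m) ^ r)^(1/r))^r
          = ∑ m ∈ box d ({0,1,2}:Finset ℤ),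
          (convF d (fun y => f (Fin.cons 0 y)) (fun y => g (Fin.cons 1 y)) m
           + convF d (fun y => f (Fin.cons 1 y)) (fun y => g (Fin.cons 0 y)) m) ^ r := by
        rw [← Real.rpow_mul hT, one_div, inv_mul_cancel₀ hr0.ne', Real.rpow_one]
      have step : (∑ m ∈ box d ({0,1,2}:Finset ℤ),
          (convF d (fun y => f (Fin.cons 0 y)) (fun y => g (Fin.cons 1 y)) m
           + convF d (fun y => f (Fin.cons 1 y)) (fun y => g (Fin.cons 0 y)) m) ^ r)^(1/r)
          ≤ A0^(1/p) * B1^(1/p) + A1^(1/p) * B0^(1/p) := by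
        have habs : ∑ m ∈ box d ({0,1,2}:Finset ℤ),
            (convF d (fun y => f (Fin.cons 0 y)) (fun y => g (Fin.cons 1 y)) m
             + convF d (fun y => f (Fin.cons 1 y)) (fun y => g (Fin.cons 0 y)) m) ^ r
            = ∑ m ∈ box d ({0,1,2}:Finset ℤ),
            |convF d (fun y => f (Fin.cons 0 y)) (fun y => g (Fin.cons 1 y)) m
             + convF d (fun y => f (Fin.cons 1 y)) (fun y => g (Fin.cons 0 y)) m| ^ r := by
          refine Finset.sum_congr rfl fun m hm => ?_
          rw [abs_of_nonneg (add_nonneg (hφ m hm) (hψ m hm))]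
        exact le_trans (le_of_eq (by rw [habs])) (le_trans mink (add_le_add c01 c10))
      calc ∑ m ∈ box d ({0,1,2}:Finset ℤ),
          (convF d (fun y => f (Fin.cons 0 y)) (fun y => g (Fin.cons 1 y)) m
           + convF d (fun y => f (Fin.cons 1 y)) (fun y => g (Fin.cons 0 y)) m) ^ r
          = _ := back.symm
        _ ≤ (A0^(1/p) * B1^(1/p) + A1^(1/p) * B0^(1/p))^r :=
          Real.rpow_le_rpow (Real.rpow_nonneg hT _) step hr0.le
    linarith [b00, b01, b11, key]

lemma incube_iff {d : ℕ} {x : Fin d → ℤ} : InCube x ↔ x ∈ box d ({0,1} : Finset ℤ) := by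
  simp [InCube, mem_box]

set_option maxHeartbeats 1000000 in
theorem young_hypercube_diagonal (d : ℕ) (hd : 1 ≤ d) (r : ℝ) (hr : 1 ≤ r)
    (f g : (Fin d → ℤ) → ℝ) (hf : SupportedInCube f) (hg : SupportedInCube g) :
    lnorm r (cconv f g) ≤
      lnorm (2 * r / Real.logb 2 (2 + 2 ^ r)) f *
        lnorm (2 * r / Real.logb 2 (2 + 2 ^ r)) g := by
  have hr0 : (0:ℝ) < r := by linarith
  have h2r : (2:ℝ) ≤ 2^r := by
    have := (Real.rpow_le_rpow_left_iff (y := 1) (z := r) one_lt_two).mpr hr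
    rwa [Real.rpow_one] at this
  have h2rpos : (0:ℝ) < 2^r := by positivity
  have hbase : (0:ℝ) < 2 + 2^r := by linarith
  set Λ : ℝ := Real.logb 2 (2 + 2^r) with hΛdef
  have hfour : (2:ℝ)^(2:ℝ) = 4 := by
    rw [show (2:ℝ) = ((2:ℕ):ℝ) by norm_num, Real.rpow_natCast]; norm_num
  have hΛ2 : 2 ≤ Λ := by
    have h4 : Real.logb 2 ((2:ℝ)^(2:ℝ)) ≤ Λ := by
      apply Real.logb_le_logb_of_le one_lt_two (by positivity)
      rw [hfour]; linarith
    rwa [Real.logb_rpow (by norm_num) (by norm_num)] at h4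
  have hΛr : r ≤ Λ := by
    have h4 : Real.logb 2 ((2:ℝ)^r) ≤ Λ := by
      apply Real.logb_le_logb_of_le one_lt_two (by positivity)
      linarith
    rwa [Real.logb_rpow (by norm_num) (by norm_num)] at h4
  have hΛ2r : Λ ≤ 2*r := by
    have h4 : Λ ≤ Real.logb 2 ((2:ℝ)^(2*r)) := by
      apply Real.logb_le_logb_of_le one_lt_two hbase
      rw [two_mul, Real.rpow_add two_pos]
      nlinarith
    rwa [Real.logb_rpow (by norm_num) (by norm_num)] at h4
  have hΛpos : 0 < Λ := by linarith
  set p : ℝ := 2*r/Λ with hpdef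
  set q : ℝ := Λ/2 with hqdef
  have hp1 : 1 ≤ p := by rw [hpdef, le_div_iff₀ hΛpos]; linarith
  have hp2 : p ≤ 2 := by rw [hpdef, div_le_iff₀ hΛpos]; linarith
  have hq1 : 1 ≤ q := by rw [hqdef]; linarith
  have hpq : p * q = r := by rw [hpdef, hqdef]; field_simp
  have hkey : (2:ℝ)^(2*q) = 2 + 2^r := by
    rw [hqdef, show 2*(Λ/2) = Λ by ring, hΛdef]
    exact Real.rpow_logb two_pos (by norm_num) hbase
  have hp0 : 0 < p := by linarith
  -- absolute values
  have hfa : ∀ x, x ∉ box d ({0,1}:Finset ℤ) → |f x| = 0 := by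
    intro x hx; rw [hf x (fun hin => hx (incube_iff.mp hin))]; exact abs_zero
  have hga : ∀ x, x ∉ box d ({0,1}:Finset ℤ) → |g x| = 0 := by
    intro x hx; rw [hg x (fun hin => hx (incube_iff.mp hin))]; exact abs_zero
  have core := MF hp1 hp2 hq1 hpq hkey d (fun x => |f x|) (fun x => |g x|)
    (fun x => abs_nonneg _) (fun x => abs_nonneg _) hfa hga
  -- cconv = convF
  have h1 : ∀ m, cconv f g m = convF d f g m := by
    intro m
    apply tsum_eq_sum
    intro u hu
    rw [hf u (fun hin => hu (incube_iff.mp hin)), zero_mul]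
  -- outside support of convolution
  have h2 : ∀ m, m ∉ box d ({0,1,2}:Finset ℤ) → convF d f g m = 0 := by
    intro m hm
    apply Finset.sum_eq_zero
    intro u hu
    have hmu : (m - u) ∉ box d ({0,1}:Finset ℤ) := by
      rw [mem_box] at hm ⊢
      push_neg at hm ⊢
      obtain ⟨i, hi⟩ := hm
      refine ⟨i, ?_⟩
      have hui := mem_box.mp hu i
      simp only [Finset.mem_insert, Finset.mem_singleton] at hi hui ⊢
      have : m i - u i ≠ 0 ∧ m i - u i ≠ 1 := by omega
      simpa [Pi.sub_apply] using this
    rw [hg _ (fun hin => hmu (incube_iff.mp hin)), mul_zero]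
  -- tsum to finite sum
  have h3 : ∑' m : Fin d → ℤ, |cconv f g m| ^ r
      = ∑ m ∈ box d ({0,1,2}:Finset ℤ), |convF d f g m| ^ r := by
    simp only [h1]
    apply tsum_eq_sum
    intro m hm
    rw [h2 m hm, abs_zero, Real.zero_rpow hr0.ne']
  have h4 : ∑ m ∈ box d ({0,1,2}:Finset ℤ), |convF d f g m| ^ r
      ≤ ∑ m ∈ box d ({0,1,2}:Finset ℤ), (convF d (fun x => |f x|) (fun x => |g x|) m) ^ r := by
    refine Finset.sum_le_sum fun m _ => ?_
    apply Real.rpow_le_rpow (abs_nonneg _) ?_ hr0.le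
    refine le_trans (Finset.abs_sum_le_sum_abs _ _) ?_
    refine le_of_eq (Finset.sum_congr rfl fun u _ => ?_)
    exact abs_mul _ _
  -- norms of f and g
  have hforig : ∑' x : Fin d → ℤ, |f x| ^ p = ∑ x ∈ box d ({0,1}:Finset ℤ), |f x| ^ p := by
    apply tsum_eq_sum
    intro x hx
    rw [hfa x hx, Real.zero_rpow hp0.ne']
  have hgorig : ∑' x : Fin d → ℤ, |g x| ^ p = ∑ x ∈ box d ({0,1}:Finset ℤ), |g x| ^ p := by
    apply tsum_eq_sum
    intro x hx
    rw [hga x hx, Real.zero_rpow hp0.ne']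
  have hA : (0:ℝ) ≤ ∑ x ∈ box d ({0,1}:Finset ℤ), |f x| ^ p :=
    Finset.sum_nonneg fun x _ => Real.rpow_nonneg (abs_nonneg _) p
  have hB : (0:ℝ) ≤ ∑ x ∈ box d ({0,1}:Finset ℤ), |g x| ^ p :=
    Finset.sum_nonneg fun x _ => Real.rpow_nonneg (abs_nonneg _) p
  -- final chain
  unfold lnorm
  rw [h3, hforig, hgorig]
  have hLHS : (0:ℝ) ≤ ∑ m ∈ box d ({0,1,2}:Finset ℤ), |convF d f g m| ^ r :=
    Finset.sum_nonneg fun m _ => Real.rpow_nonneg (abs_nonneg _) r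
  have step := Real.rpow_le_rpow hLHS (le_trans h4 core) (by positivity : (0:ℝ) ≤ 1/r)
  refine le_trans step (le_of_eq ?_)
  rw [← Real.rpow_mul (mul_nonneg hA hB), show q * (1/r) = 1/p by
    rw [← hpq]; field_simp, Real.mul_rpow hA hB]
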